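/- Let p be a prime, i ≥ 1, j ≥ 0, and let U = U_i(Z/p^{j+1}) be the group of unitriangular (i+1)×(i+1) matrices over Z/p^{j+1}. For 1 ≤ i' ≤ i let U^{(i')} be the subgroup of U consisting of matrices that vanish on the first i'−1 diagonals above the main diagonal, and let j' ≥ 0. Then: (b) (U^{(i')})^{p^{j'}} = I + p^j·(Z/p^{j+1})·E_{1,i+1} if and only if j' ≥ j and i = i'·p^{j'−j}; and (c) (U^{(i')})^{p^{j'}} ⊆ I + p^j·(Z/p^{j+1})·E_{1,i+1} if and only if i'·p^{j'} ≥ i·p^{j}. -/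

import Mathlib

variable (R : Type*) [CommRing R] (m : ℕ)

/-- A square matrix is unitriangular if it is upper triangular with all diagonal entries `1`. -/
def IsUnitriangular (M : Matrix (Fin m) (Fin m) R) : Prop :=
  (∀ k, M k k = 1) ∧ ∀ k l : Fin m, l < k → M k l = 0

/-- The group of unitriangular `m × m` matrices over `R`, as a subgroup of the units of the
matrix ring. -/
def UT : Subgroup (Matrix (Fin m) (Fin m) R)ˣ where
  carrier := {M | IsUnitriangular R m (M : Matrix (Fin m) (Fin m) R)}
  one_mem' := by
    constructor
    · intro k; simp [Matrix.one_apply]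
    · intro k l h; simp [Matrix.one_apply, (ne_of_lt h).symm]
  mul_mem' := by
    rintro A B ⟨hA1, hA2⟩ ⟨hB1, hB2⟩
    constructor
    · intro k
      rw [Units.val_mul, Matrix.mul_apply]
      rw [Finset.sum_eq_single k]
      · rw [hA1, hB1, one_mul]
      · intro j _ hj
        rcases lt_or_gt_of_ne hj with h | h
        · rw [hA2 _ _ h, zero_mul]
        · rw [hB2 _ _ h, mul_zero]
      · intro h; exact absurd (Finset.mem_univ k) h
    · intro k l hlk
      rw [Units.val_mul, Matrix.mul_apply]
      apply Finset.sum_eq_zero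
      intro j _
      rcases lt_or_ge (j : Fin m) k with h | h
      · rw [hA2 _ _ h, zero_mul]
      · rw [hB2 _ _ (lt_of_lt_of_le hlk h), mul_zero]
  inv_mem' := by
    rintro A ⟨hA1, hA2⟩
    have hcoe : ((A⁻¹ : (Matrix (Fin m) (Fin m) R)ˣ) : Matrix (Fin m) (Fin m) R) =
        ((A : Matrix (Fin m) (Fin m) R))⁻¹ := Matrix.coe_units_inv A
    haveI : Invertible (A : Matrix (Fin m) (Fin m) R) := A.invertible
    have hBT : Matrix.BlockTriangular (A : Matrix (Fin m) (Fin m) R) id :=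
      fun k l h => hA2 k l h
    have hBTinv : Matrix.BlockTriangular ((A : Matrix (Fin m) (Fin m) R))⁻¹ id :=
      Matrix.blockTriangular_inv_of_blockTriangular hBT
    constructor
    · intro k
      have hmul := congrFun (congrFun
        (Matrix.mul_inv_of_invertible (A : Matrix (Fin m) (Fin m) R)) k) k
      rw [Matrix.mul_apply] at hmul
      rw [Finset.sum_eq_single k] at hmul
      · rw [hA1] at hmul
        rw [hcoe]
        simpa using hmul
      · intro j _ hj
        rcases lt_or_gt_of_ne hj with h | h
        · rw [hA2 _ _ h, zero_mul]
        · rw [hBTinv (show id k < id j from h), mul_zero]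
      · intro hmem; exact absurd (Finset.mem_univ k) hmem
    · intro k l h
      rw [hcoe]
      exact hBTinv h

/-- The subgroup `U^{(i')}` of the unitriangular group, consisting of the matrices whose entries
on the first `i' - 1` diagonals above the main diagonal all vanish. -/
def UTk (i' : ℕ) : Subgroup ↥(UT R m) where
  carrier := {M | ∀ k l : Fin m, (k : ℕ) < l → (l : ℕ) < k + i' →
    ((M : (Matrix (Fin m) (Fin m) R)ˣ) : Matrix (Fin m) (Fin m) R) k l = 0}
  one_mem' := by
    intro k l h1 h2
    have hkl : k ≠ l := fun h => by simp [h] at h1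
    simp [Matrix.one_apply, hkl]
  mul_mem' := by
    rintro A B hA hB k l hkl hli
    have hAut := A.2
    have hBut := B.2
    show ((↑A * ↑B : (Matrix (Fin m) (Fin m) R)ˣ) : Matrix (Fin m) (Fin m) R) k l = 0
    rw [Units.val_mul, Matrix.mul_apply]
    apply Finset.sum_eq_zero
    intro j _
    rcases lt_trichotomy (j : ℕ) (k : ℕ) with h | h | h
    · rw [hAut.2 k j (Fin.lt_def.mpr h), zero_mul]
    · have hj : j = k := Fin.ext h
      subst hj
      rw [hB j l hkl hli, mul_zero]
    · rcases lt_or_ge (l : ℕ) (j : ℕ) with h' | h'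
      · rw [hBut.2 j l (Fin.lt_def.mpr h'), mul_zero]
      · rw [hA k j h (lt_of_le_of_lt h' hli), zero_mul]
  inv_mem' := by
    rintro A hA k l hkl hli
    have hAut := A.2
    have hinv := (A⁻¹).2
    have hone : ((↑A : (Matrix (Fin m) (Fin m) R)ˣ) : Matrix (Fin m) (Fin m) R) *
        ((↑A⁻¹ : (Matrix (Fin m) (Fin m) R)ˣ) : Matrix (Fin m) (Fin m) R) = 1 := by
      rw [← Units.val_mul]
      norm_cast
      rw [mul_inv_cancel]
      rfl
    have hentry := congrFun (congrFun hone k) l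
    rw [Matrix.mul_apply] at hentry
    rw [Finset.sum_eq_single k] at hentry
    · have hkl' : k ≠ l := fun h => by simp [h] at hkl
      rw [hAut.1] at hentry
      rw [Matrix.one_apply_ne hkl'] at hentry
      simpa using hentry
    · intro j _ hj
      rcases lt_trichotomy (j : ℕ) (k : ℕ) with h | h | h
      · rw [hAut.2 k j (Fin.lt_def.mpr h), zero_mul]
      · exact absurd (Fin.ext h) hj
      · rcases lt_or_ge (j : ℕ) ((k : ℕ) + i') with h' | h'
        · rw [hA k j h h', zero_mul]
        · rw [hinv.2 j l (Fin.lt_def.mpr (lt_of_lt_of_le hli h')), mul_zero]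
    · intro hmem; exact absurd (Finset.mem_univ k) hmem

/-- The subgroup generated by the `q`-th powers of the elements of a subgroup. -/
def pPow {G : Type*} [Group G] (K : Subgroup G) (q : ℕ) : Subgroup G :=
  Subgroup.closure {x | ∃ y ∈ K, x = y ^ q}

/-- An auxiliary product identity for corner matrices. -/

theorem corner_mul (p j i : ℕ) (R : Type*) [CommRing R] (hi : 0 < i) (a b : R) :
    (1 + Matrix.single (0 : Fin (i+1)) (Fin.last i) ((p : R) ^ j * a)) *
      (1 + Matrix.single (0 : Fin (i+1)) (Fin.last i) ((p : R) ^ j * b)) =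
    1 + Matrix.single (0 : Fin (i+1)) (Fin.last i) ((p : R) ^ j * (a + b)) := by
  have hne : Fin.last i ≠ (0 : Fin (i+1)) := by simp [Fin.ext_iff, Fin.last]; omega
  rw [mul_add, add_mul, add_mul, one_mul, mul_one, one_mul,
    Matrix.single_mul_single_of_ne (h := hne), mul_add, Matrix.single_add]
  abel


/-- The subgroup `I + p^j (ℤ/p^{j+1}) E_{1,i+1}` of the unitriangular `(i+1) × (i+1)` matrices
over `ℤ/p^{j+1}`: matrices differing from the identity only at the upper-right corner entry,
by a multiple of `p^j`. -/
def cornerSub (p j i : ℕ) : Subgroup ↥(UT (ZMod (p ^ (j + 1))) (i + 1)) where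
  carrier := {M | ∃ a : ZMod (p ^ (j + 1)),
    ((M : (Matrix (Fin (i + 1)) (Fin (i + 1)) (ZMod (p ^ (j + 1))))ˣ) :
        Matrix (Fin (i + 1)) (Fin (i + 1)) (ZMod (p ^ (j + 1)))) =
      1 + Matrix.single 0 (Fin.last i) ((p : ZMod (p ^ (j + 1))) ^ j * a)}
  one_mem' := ⟨0, by simp⟩
  mul_mem' := by
    rintro A B ⟨a, ha⟩ ⟨b, hb⟩
    refine ⟨a + b, ?_⟩
    have hAB : ((↑(A * B) : (Matrix (Fin (i + 1)) (Fin (i + 1)) (ZMod (p ^ (j + 1))))ˣ) :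
        Matrix (Fin (i + 1)) (Fin (i + 1)) (ZMod (p ^ (j + 1)))) =
        ((↑A : (Matrix (Fin (i + 1)) (Fin (i + 1)) (ZMod (p ^ (j + 1))))ˣ) :
          Matrix (Fin (i + 1)) (Fin (i + 1)) (ZMod (p ^ (j + 1)))) *
        ((↑B : (Matrix (Fin (i + 1)) (Fin (i + 1)) (ZMod (p ^ (j + 1))))ˣ) :
          Matrix (Fin (i + 1)) (Fin (i + 1)) (ZMod (p ^ (j + 1)))) := rfl
    rw [hAB, ha, hb]
    rcases Nat.eq_zero_or_pos i with hi | hi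
    · subst hi
      have hca : (p : ZMod (p ^ (j + 1))) ^ j * a = 0 := by
        have hd := A.2.1 0
        rw [ha] at hd
        simpa [Matrix.add_apply, Matrix.one_apply, Fin.last] using hd
      have hcb : (p : ZMod (p ^ (j + 1))) ^ j * b = 0 := by
        have hd := B.2.1 0
        rw [hb] at hd
        simpa [Matrix.add_apply, Matrix.one_apply, Fin.last] using hd
      simp [mul_add, hca, hcb]
    · exact corner_mul p j i _ hi a b
  inv_mem' := by
    rintro A ⟨a, ha⟩
    refine ⟨-a, ?_⟩
    have key : ((↑A : (Matrix (Fin (i + 1)) (Fin (i + 1)) (ZMod (p ^ (j + 1))))ˣ) :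
        Matrix (Fin (i + 1)) (Fin (i + 1)) (ZMod (p ^ (j + 1)))) *
        (1 + Matrix.single 0 (Fin.last i) ((p : ZMod (p ^ (j + 1))) ^ j * (-a))) =
        1 := by
      rcases Nat.eq_zero_or_pos i with hi | hi
      · subst hi
        have hca : (p : ZMod (p ^ (j + 1))) ^ j * a = 0 := by
          have hd := A.2.1 0
          rw [ha] at hd
          simpa [Matrix.add_apply, Matrix.one_apply, Fin.last] using hd
        have hca' : (p : ZMod (p ^ (j + 1))) ^ j * (-a) = 0 := by
          rw [mul_neg, hca, neg_zero]
        rw [ha, hca, hca']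
        simp
      · rw [ha, corner_mul p j i _ hi a (-a)]
        simp
    calc ((↑A⁻¹ : (Matrix (Fin (i + 1)) (Fin (i + 1)) (ZMod (p ^ (j + 1))))ˣ) :
          Matrix (Fin (i + 1)) (Fin (i + 1)) (ZMod (p ^ (j + 1)))) =
        ((↑A⁻¹ : (Matrix (Fin (i + 1)) (Fin (i + 1)) (ZMod (p ^ (j + 1))))ˣ) :
          Matrix (Fin (i + 1)) (Fin (i + 1)) (ZMod (p ^ (j + 1)))) * 1 := (mul_one _).symm
      _ = ((↑A⁻¹ : (Matrix (Fin (i + 1)) (Fin (i + 1)) (ZMod (p ^ (j + 1))))ˣ) :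
          Matrix (Fin (i + 1)) (Fin (i + 1)) (ZMod (p ^ (j + 1)))) *
          (((↑A : (Matrix (Fin (i + 1)) (Fin (i + 1)) (ZMod (p ^ (j + 1))))ˣ) :
            Matrix (Fin (i + 1)) (Fin (i + 1)) (ZMod (p ^ (j + 1)))) *
          (1 + Matrix.single 0 (Fin.last i)
            ((p : ZMod (p ^ (j + 1))) ^ j * (-a)))) := by rw [key]
      _ = 1 + Matrix.single 0 (Fin.last i)
            ((p : ZMod (p ^ (j + 1))) ^ j * (-a)) := by
          rw [← mul_assoc, ← Units.val_mul]
          norm_cast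
          rw [inv_mul_cancel]
          simp

section Aux

variable {S : Type*} [CommRing S] {n : ℕ}

/-- entry support of powers of a matrix supported on diagonals `≥ d`. -/
lemma aux_pow_support {d : ℕ} (N : Matrix (Fin n) (Fin n) S)
    (hN : ∀ a b : Fin n, (b : ℕ) < (a : ℕ) + d → N a b = 0) :
    ∀ (k : ℕ) (a b : Fin n), (b : ℕ) < (a : ℕ) + k * d → (N ^ k) a b = 0 := by
  intro k
  induction k with
  | zero =>
    intro a b h
    simp only [Nat.zero_mul, Nat.add_zero] at h
    rw [pow_zero, Matrix.one_apply_ne (by intro he; subst he; omega)]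
  | succ k ih =>
    intro a b h
    rw [Nat.succ_mul] at h
    rw [pow_succ, Matrix.mul_apply]
    apply Finset.sum_eq_zero
    intro c _
    rcases lt_or_ge (c : ℕ) ((a : ℕ) + k * d) with hc | hc
    · rw [ih a c hc, zero_mul]
    · rw [hN c b (by omega), mul_zero]

/-- the shift matrix by `d`. -/
def shiftM (n d : ℕ) : Matrix (Fin n) (Fin n) S :=
  fun a b => if (b : ℕ) = (a : ℕ) + d then 1 else 0

lemma shiftM_pow (d k : ℕ) (a b : Fin n) :
    ((shiftM n d : Matrix (Fin n) (Fin n) S) ^ k) a b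
      = if (b : ℕ) = (a : ℕ) + k * d then 1 else 0 := by
  induction k generalizing a b with
  | zero =>
    rw [pow_zero, Matrix.one_apply]
    congr 1
    rw [eq_iff_iff, Fin.ext_iff]
    omega
  | succ k ih =>
    have hsm : (k + 1) * d = k * d + d := Nat.succ_mul k d
    rw [pow_succ, Matrix.mul_apply, hsm]
    by_cases hc : (a : ℕ) + k * d < n
    · rw [Finset.sum_eq_single (⟨(a : ℕ) + k * d, hc⟩ : Fin n)]
      · rw [ih]
        simp only [Fin.val_mk, if_pos rfl, one_mul, shiftM]
        rw [if_pos trivial, one_mul, Nat.add_assoc]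
      · intro c _ hne
        rw [ih]
        have : (c : ℕ) ≠ (a : ℕ) + k * d := fun he => hne (Fin.ext he)
        rw [if_neg this, zero_mul]
      · intro hmem; exact absurd (Finset.mem_univ _) hmem
    · rw [Finset.sum_eq_zero, if_neg (by have := b.isLt; omega)]
      intro c _
      rw [ih, if_neg (by have := c.isLt; omega), zero_mul]

lemma IsUnitriangular.det_eq_one {M : Matrix (Fin n) (Fin n) S}
    (hM : IsUnitriangular S n M) : M.det = 1 := by
  have hBT : M.BlockTriangular id := fun a b h => hM.2 a b h
  rw [Matrix.det_of_upperTriangular hBT]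
  simp [hM.1]

lemma IsUnitriangular.isUnit {M : Matrix (Fin n) (Fin n) S}
    (hM : IsUnitriangular S n M) : IsUnit M := by
  rw [Matrix.isUnit_iff_isUnit_det, hM.det_eq_one]
  exact isUnit_one

/-- build an element of `UT` from a unitriangular matrix. -/
noncomputable def mkUT {M : Matrix (Fin n) (Fin n) S} (hM : IsUnitriangular S n M) :
    ↥(UT S n) :=
  ⟨hM.isUnit.unit, show IsUnitriangular S n _ by rw [hM.isUnit.unit_spec]; exact hM⟩

@[simp] lemma mkUT_val {M : Matrix (Fin n) (Fin n) S} (hM : IsUnitriangular S n M) :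
    (((mkUT hM : ↥(UT S n)) : (Matrix (Fin n) (Fin n) S)ˣ) : Matrix (Fin n) (Fin n) S) = M :=
  hM.isUnit.unit_spec

lemma UT_pow_val (x : ↥(UT S n)) (q : ℕ) :
    (((x ^ q : ↥(UT S n)) : (Matrix (Fin n) (Fin n) S)ˣ) : Matrix (Fin n) (Fin n) S)
      = (((x : (Matrix (Fin n) (Fin n) S)ˣ) : Matrix (Fin n) (Fin n) S)) ^ q := by
  rw [SubgroupClass.coe_pow, Units.val_pow_eq_pow_val]

lemma natCast_mul_eq_smul (C : ℕ) (A : Matrix (Fin n) (Fin n) S) :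
    A * (C : Matrix (Fin n) (Fin n) S) = (C : S) • A := by
  have h1 : ((C : ℕ) : Matrix (Fin n) (Fin n) S) = (C : S) • 1 := by
    ext a b
    rw [← Matrix.diagonal_natCast]
    by_cases h : a = b
    · subst h; simp
    · simp [Matrix.diagonal_apply_ne _ h, Matrix.one_apply_ne h]
  rw [h1, mul_smul_comm, mul_one]

/-- binomial expansion for powers of elements of `UT`. -/
lemma UT_pow_eq_sum (x : ↥(UT S n)) (q : ℕ) :
    (((x ^ q : ↥(UT S n)) : (Matrix (Fin n) (Fin n) S)ˣ) : Matrix (Fin n) (Fin n) S)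
      = ∑ k ∈ Finset.range (q + 1), (Nat.choose q k : S) •
          ((((x : (Matrix (Fin n) (Fin n) S)ˣ) : Matrix (Fin n) (Fin n) S)) - 1) ^ k := by
  rw [UT_pow_val]
  set N := (((x : (Matrix (Fin n) (Fin n) S)ˣ) : Matrix (Fin n) (Fin n) S)) - 1 with hN
  have hx : (((x : (Matrix (Fin n) (Fin n) S)ˣ) : Matrix (Fin n) (Fin n) S)) = N + 1 := by
    rw [hN]; abel
  rw [hx, Commute.add_pow (Commute.one_right N)]
  apply Finset.sum_congr rfl
  intro k _
  rw [one_pow, mul_one, natCast_mul_eq_smul]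

end Aux

section NT
open Nat

lemma mult_le_of_le_pow {p k s : ℕ} (hp : p.Prime) (hk0 : k ≠ 0) (hk : k ≤ p ^ s) :
    multiplicity p k ≤ s := by
  by_contra h
  push_neg at h
  have hdvd : p ^ (s + 1) ∣ k := by
    have hf : FiniteMultiplicity p k :=
      Nat.finiteMultiplicity_iff.mpr ⟨hp.one_lt.ne', Nat.pos_of_ne_zero hk0⟩
    exact hf.pow_dvd_iff_le_multiplicity.mpr h
  have h1 := Nat.le_of_dvd (Nat.pos_of_ne_zero hk0) hdvd
  have h2 : p ^ s < p ^ (s + 1) := Nat.pow_lt_pow_right hp.one_lt (Nat.lt_succ_self s)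
  omega

lemma mult_lt_of_lt_pow {p k s : ℕ} (hp : p.Prime) (hk0 : k ≠ 0) (hk : k < p ^ s) :
    multiplicity p k < s := by
  by_contra h
  push_neg at h
  have hf : FiniteMultiplicity p k :=
    Nat.finiteMultiplicity_iff.mpr ⟨hp.one_lt.ne', Nat.pos_of_ne_zero hk0⟩
  have hdvd : p ^ s ∣ k := hf.pow_dvd_iff_le_multiplicity.mpr h
  have := Nat.le_of_dvd (Nat.pos_of_ne_zero hk0) hdvd
  omega

lemma pow_dvd_choose_pow {p k j' t : ℕ} (hp : p.Prime) (hk0 : k ≠ 0) (hk : k ≤ p ^ j')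
    (h : t + multiplicity p k ≤ j') : p ^ t ∣ Nat.choose (p ^ j') k := by
  rw [pow_dvd_iff_le_emultiplicity, hp.emultiplicity_choose_prime_pow hk hk0]
  exact_mod_cast Nat.le_sub_of_add_le' (by omega)

lemma not_pow_dvd_choose_pow {p j j' : ℕ} (hp : p.Prime) (hj : j ≤ j') :
    ¬ p ^ (j + 1) ∣ Nat.choose (p ^ j') (p ^ (j' - j)) := by
  rw [← emultiplicity_lt_iff_not_dvd, hp.emultiplicity_choose_prime_pow
    (Nat.pow_le_pow_right hp.pos (by omega)) (pow_pos hp.pos _).ne',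
    multiplicity_pow_self hp.ne_zero hp.prime.not_isUnit]
  exact_mod_cast by omega

end NT

section ZModAux

variable {p j : ℕ}

lemma dvd_of_zmod_corner (hp : p.Prime) {n : ℕ} {a : ZMod (p ^ (j+1))}
    (h : (n : ZMod (p ^ (j+1))) = (p : ZMod (p ^ (j+1))) ^ j * a) : p ^ j ∣ n := by
  haveI : NeZero (p ^ (j+1)) := ⟨(pow_pos hp.pos _).ne'⟩
  obtain ⟨b, rfl⟩ : ∃ b : ℕ, (b : ZMod (p ^ (j+1))) = a := ⟨a.val, ZMod.natCast_rightInverse a⟩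
  rw [← Nat.cast_pow, ← Nat.cast_mul] at h
  have := (ZMod.natCast_eq_natCast_iff _ _ _).mp h
  have hd := (Nat.modEq_iff_dvd.mp this)
  have h1 : (p:ℤ) ^ j ∣ (p:ℤ) ^ (j+1) := pow_dvd_pow _ (by omega)
  have h3 : (p:ℤ) ^ j ∣ (n : ℤ) := by
    have h4 : (p:ℤ) ^ j ∣ ((p ^ j * b : ℕ) : ℤ) - (n : ℤ) :=
      h1.trans (by push_cast at hd ⊢; exact hd)
    have h5 : (p:ℤ) ^ j ∣ ((p ^ j * b : ℕ) : ℤ) := by push_cast; exact Dvd.intro _ rfl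
    have h6 := dvd_sub h5 h4
    simpa using h6
  exact_mod_cast Int.natCast_dvd_natCast.mp (by exact_mod_cast h3)

lemma frob_iter (hp : p.Prime) (s : ℕ) (b : ZMod (p ^ (j+1))) :
    ∃ z : ZMod (p ^ (j+1)), b ^ (p ^ s) = b + p * z := by
  haveI : NeZero (p ^ (j+1)) := ⟨(pow_pos hp.pos _).ne'⟩
  haveI : Fact p.Prime := ⟨hp⟩
  induction s generalizing b with
  | zero => exact ⟨0, by simp⟩
  | succ s ih =>
    have hbp : ∃ w : ZMod (p ^ (j+1)), b ^ p = b + p * w := by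
      set t : ℕ := b.val with ht
      have hb : (t : ZMod (p ^ (j+1))) = b := ZMod.natCast_rightInverse b
      have hmodp : ((t ^ p - t : ℤ) : ZMod p) = 0 := by
        push_cast
        rw [ZMod.pow_card]
        ring
      obtain ⟨m, hm⟩ := (ZMod.intCast_zmod_eq_zero_iff_dvd _ _).mp hmodp
      refine ⟨(m : ZMod (p ^ (j+1))), ?_⟩
      have : ((t ^ p - t : ℤ) : ZMod (p ^ (j+1))) = ((p * m : ℤ) : ZMod (p ^ (j+1))) := by
        rw [hm]
      push_cast at this
      rw [hb] at this
      linear_combination this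
    obtain ⟨w, hw⟩ := hbp
    obtain ⟨z, hz⟩ := ih (b + p * w)
    refine ⟨w + z, ?_⟩
    have h2 : b ^ p ^ (s + 1) = (b ^ p) ^ p ^ s := by rw [← pow_mul, ← pow_succ']
    rw [h2, hw, hz]
    ring

end ZModAux

section Key

variable {p j j' : ℕ}

/-- binomial coefficients `C(p^{j'}, k)` with `1 ≤ k < p^{j'-j}` vanish mod `p^{j+1}`. -/
lemma key_cast_zero (hp : p.Prime) (hjj' : j ≤ j') {k : ℕ} (hk1 : 1 ≤ k)
    (hkq : k ≤ p ^ j') (hklt : k < p ^ (j' - j)) :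
    ((Nat.choose (p ^ j') k : ℕ) : ZMod (p ^ (j+1))) = 0 := by
  rw [ZMod.natCast_eq_zero_iff]
  have hm := mult_lt_of_lt_pow hp (by omega) hklt
  exact pow_dvd_choose_pow hp (by omega) hkq (by omega)

/-- binomial coefficients `C(p^{j'}, k)` with `1 ≤ k ≤ p^{j'-j}` are divisible by `p^j`. -/
lemma key_dvd (hp : p.Prime) (hjj' : j ≤ j') {k : ℕ} (hk1 : 1 ≤ k)
    (hkq : k ≤ p ^ j') (hkle : k ≤ p ^ (j' - j)) :
    (p : ZMod (p ^ (j+1))) ^ j ∣ ((Nat.choose (p ^ j') k : ℕ) : ZMod (p ^ (j+1))) := by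
  have hm := mult_le_of_le_pow hp (by omega) hkle
  have hd : p ^ j ∣ Nat.choose (p ^ j') k :=
    pow_dvd_choose_pow hp (by omega) hkq (by omega)
  obtain ⟨m, hm'⟩ := hd
  exact ⟨(m : ZMod (p ^ (j+1))), by rw [hm']; push_cast; ring⟩

end Key

section ShiftElt

variable {S : Type*} [CommRing S] {n : ℕ}

lemma one_add_smul_shift_unitriangular (d : ℕ) (hd : 1 ≤ d) (b : S) :
    IsUnitriangular S n (1 + b • shiftM n d) := by
  constructor
  · intro k
    rw [Matrix.add_apply, Matrix.smul_apply, shiftM]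
    rw [if_neg (by omega), Matrix.one_apply_eq]
    simp
  · intro k l h
    rw [Matrix.add_apply, Matrix.smul_apply, shiftM]
    rw [if_neg (by rw [Fin.lt_def] at h; omega), Matrix.one_apply_ne (by exact (ne_of_lt h).symm)]
    simp

lemma pow_one_add_smul_shift (d q : ℕ) (b : S) :
    (1 + b • shiftM n d) ^ q
      = 1 + ∑ k ∈ Finset.Ico 1 (q+1),
          ((Nat.choose q k : S) * b ^ k) • ((shiftM n d : Matrix (Fin n) (Fin n) S) ^ k) := by
  rw [add_comm (1 : Matrix (Fin n) (Fin n) S), Commute.add_pow (Commute.one_right _)]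
  have hsplit : Finset.range (q+1) = insert 0 (Finset.Ico 1 (q+1)) := by
    ext t; simp; omega
  rw [hsplit, Finset.sum_insert (by simp)]
  congr 1
  · simp
  · apply Finset.sum_congr rfl
    intro k _
    rw [one_pow, mul_one, natCast_mul_eq_smul, smul_pow, smul_smul]

end ShiftElt

section Main

lemma UTk_sub_one_support (p i i' j : ℕ) (y : ↥(UT (ZMod (p ^ (j + 1))) (i + 1)))
    (hy : y ∈ UTk (ZMod (p ^ (j + 1))) (i + 1) i') :
    ∀ a b : Fin (i+1), (b : ℕ) < (a : ℕ) + i' →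
      ((((y : (Matrix (Fin (i+1)) (Fin (i+1)) (ZMod (p ^ (j + 1))))ˣ)) :
        Matrix (Fin (i+1)) (Fin (i+1)) (ZMod (p ^ (j + 1)))) - 1) a b = 0 := by
  intro a b h
  have hyut : IsUnitriangular (ZMod (p ^ (j + 1))) (i+1)
      (((y : (Matrix (Fin (i+1)) (Fin (i+1)) (ZMod (p ^ (j + 1))))ˣ)) :
        Matrix (Fin (i+1)) (Fin (i+1)) (ZMod (p ^ (j + 1)))) := y.2
  rw [Matrix.sub_apply]
  rcases lt_trichotomy (b : ℕ) (a : ℕ) with h1 | h1 | h1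
  · rw [hyut.2 a b (Fin.lt_def.mpr h1), Matrix.one_apply_ne (by
      intro he; subst he; omega), sub_zero]
  · have : a = b := Fin.ext h1.symm
    subst this
    rw [hyut.1, Matrix.one_apply_eq, sub_self]
  · rw [hy a b h1 h, Matrix.one_apply_ne (by intro he; subst he; omega), sub_zero]

lemma part_c_suff (p i i' j j' : ℕ) (hp : p.Prime) (hi : 1 ≤ i) (h1 : 1 ≤ i') (h2 : i' ≤ i)
    (hin : i * p ^ j ≤ i' * p ^ j') :
    pPow (UTk (ZMod (p ^ (j + 1))) (i + 1) i') (p ^ j') ≤ cornerSub p j i := by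
  set R := ZMod (p ^ (j + 1)) with hR
  set q := p ^ j' with hq
  have hq1 : 1 ≤ q := pow_pos hp.pos _
  have hjj' : j ≤ j' := by
    have ha : i' * p ^ j ≤ i' * p ^ j' := le_trans (Nat.mul_le_mul_right _ h2) hin
    have hb : p ^ j ≤ p ^ j' := Nat.le_of_mul_le_mul_left ha (by omega)
    exact (Nat.pow_le_pow_iff_right hp.one_lt).mp hb
  have hipow : i ≤ i' * p ^ (j' - j) := by
    have hsplit : p ^ j' = p ^ (j' - j) * p ^ j := by rw [← pow_add]; congr 1; omega
    rw [hq, hsplit, ← mul_assoc] at hin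
    exact Nat.le_of_mul_le_mul_right hin (pow_pos hp.pos _)
  refine (Subgroup.closure_le _).mpr ?_
  rintro x ⟨y, hy, rfl⟩
  set N : Matrix (Fin (i+1)) (Fin (i+1)) R :=
    (((y : (Matrix (Fin (i+1)) (Fin (i+1)) R)ˣ)) : Matrix (Fin (i+1)) (Fin (i+1)) R) - 1
    with hNdef
  have hNsupp : ∀ a b : Fin (i+1), (b : ℕ) < (a : ℕ) + i' → N a b = 0 :=
    UTk_sub_one_support p i i' j y hy
  have hpows := UT_pow_eq_sum y q
  set c : R := ∑ k ∈ Finset.Ico 1 (q+1), (Nat.choose q k : R) * (N ^ k) 0 (Fin.last i)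
    with hcdef
  have hc : (p : R) ^ j ∣ c := by
    apply Finset.dvd_sum
    intro k hk
    rw [Finset.mem_Ico] at hk
    by_cases hz : (N ^ k) 0 (Fin.last i) = 0
    · rw [hz, mul_zero]; exact dvd_zero _
    · have hki : k * i' ≤ i := by
        by_contra hcon
        exact hz (aux_pow_support N hNsupp k 0 (Fin.last i)
          (by simp only [Fin.val_last, Fin.val_zero]; omega))
      have hkle : k ≤ p ^ (j' - j) := by
        have : i' * k ≤ i' * p ^ (j' - j) := by
          calc i' * k = k * i' := mul_comm _ _
          _ ≤ i := hki
          _ ≤ i' * p ^ (j' - j) := hipow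
        exact Nat.le_of_mul_le_mul_left this (by omega)
      exact dvd_mul_of_dvd_left (key_dvd hp hjj' (by omega) (by omega) hkle) _
  obtain ⟨a, ha⟩ := hc
  show ∃ a : R, _
  refine ⟨a, ?_⟩
  rw [← ha, hpows]
  ext r s
  have hsplit2 : Finset.range (q+1) = insert 0 (Finset.Ico 1 (q+1)) := by
    ext t; simp; omega
  rw [Matrix.add_apply, Matrix.sum_apply, hsplit2, Finset.sum_insert (by simp)]
  simp only [Matrix.smul_apply, smul_eq_mul]
  have h0 : (Nat.choose q 0 : R) * (N ^ 0) r s = (1 : Matrix (Fin (i+1)) (Fin (i+1)) R) r s := by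
    simp
  rw [h0]
  congr 1
  by_cases hrs : (0 : Fin (i+1)) = r ∧ Fin.last i = s
  · obtain ⟨hr, hs⟩ := hrs
    rw [← hr, ← hs]
    rw [Matrix.single_apply_same]
  · rw [Matrix.single_apply_of_ne _ _ _ _ _ hrs]
    apply Finset.sum_eq_zero
    intro k hk
    rw [Finset.mem_Ico] at hk
    by_cases hz : (s : ℕ) < (r : ℕ) + k * i'
    · rw [aux_pow_support N hNsupp k r s hz, mul_zero]
    · push_neg at hz
      have hs_le : (s : ℕ) ≤ i := Nat.lt_succ_iff.mp s.isLt
      have hcorner : ¬((r : ℕ) = 0 ∧ (s : ℕ) = i) := by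
        intro ⟨hr0, hsi⟩
        exact hrs ⟨Fin.ext (by simp [hr0]), Fin.ext (by simp [hsi])⟩
      have hklt' : k < p ^ (j' - j) := by
        have hklt : k * i' < i' * p ^ (j' - j) := by omega
        rw [mul_comm] at hklt
        exact Nat.lt_of_mul_lt_mul_left hklt
      rw [key_cast_zero hp hjj' (by omega) (by omega) hklt', zero_mul]

end Main

section Main2

variable {p i i' j j' : ℕ}

lemma xq_entry (i' : ℕ) (b : ZMod (p ^ (j + 1))) (q : ℕ) (r s : Fin (i+1)) :
    (((1 + b • shiftM (i+1) i' : Matrix (Fin (i+1)) (Fin (i+1)) (ZMod (p ^ (j + 1)))) ^ q)) r s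
      = (1 : Matrix (Fin (i+1)) (Fin (i+1)) (ZMod (p ^ (j + 1)))) r s
        + ∑ k ∈ Finset.Ico 1 (q+1), (Nat.choose q k : ZMod (p ^ (j + 1))) * b ^ k *
            (if (s : ℕ) = (r : ℕ) + k * i' then 1 else 0) := by
  rw [pow_one_add_smul_shift, Matrix.add_apply, Matrix.sum_apply]
  congr 1
  apply Finset.sum_congr rfl
  intro k _
  rw [Matrix.smul_apply, shiftM_pow, smul_eq_mul, mul_assoc]

lemma shift_elt_mem_UTk (h1 : 1 ≤ i') (b : ZMod (p ^ (j + 1))) :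
    mkUT (one_add_smul_shift_unitriangular (n := i+1) i' h1 b)
      ∈ UTk (ZMod (p ^ (j + 1))) (i + 1) i' := by
  intro k l hkl hkl2
  rw [mkUT_val, Matrix.add_apply, Matrix.smul_apply, shiftM,
    Matrix.one_apply_ne (by intro he; subst he; omega), if_neg (by omega)]
  simp

lemma part_c_nec (hp : p.Prime) (hi : 1 ≤ i) (h1 : 1 ≤ i') (h2 : i' ≤ i)
    (hle : pPow (UTk (ZMod (p ^ (j + 1))) (i + 1) i') (p ^ j') ≤ cornerSub p j i) :
    i * p ^ j ≤ i' * p ^ j' := by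
  set R := ZMod (p ^ (j + 1)) with hR
  set q := p ^ j' with hq
  have hq1 : 1 ≤ q := pow_pos hp.pos _
  by_contra hcon
  push_neg at hcon
  set x := mkUT (one_add_smul_shift_unitriangular (n := i+1) i' h1 (1 : R)) with hxdef
  have hxk := shift_elt_mem_UTk (i := i) h1 (1 : R)
  have hxq : x ^ q ∈ cornerSub p j i := hle (Subgroup.subset_closure ⟨x, hxk, rfl⟩)
  obtain ⟨a, ha⟩ := hxq
  rw [UT_pow_val, mkUT_val] at ha
  rcases lt_or_ge j' j with hj' | hj'
  · -- j' < j : use k₀ = 1, position (0, i')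
    have hposlt : i' < i + 1 := by omega
    set pos : Fin (i+1) := ⟨i', hposlt⟩ with hpos
    have hL := xq_entry (i := i) i' (1 : R) q 0 pos
    rw [Finset.sum_eq_single 1] at hL
    · rw [Matrix.one_apply_ne
        (by intro he; rw [Fin.ext_iff] at he; simp [hpos] at he; omega)] at hL
      simp only [Nat.choose_one_right, one_pow, mul_one, Fin.val_zero, one_mul, hpos] at hL
      rw [if_pos (by simp), mul_one, zero_add] at hL
      have hR' := congrFun (congrFun ha 0) pos
      rw [hL, Matrix.add_apply, Matrix.one_apply_ne
        (by intro he; rw [Fin.ext_iff] at he; simp [hpos] at he; omega)] at hR'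
      rw [zero_add] at hR'
      by_cases hii : i' = i
      · have hpl : pos = Fin.last i := by rw [Fin.ext_iff]; simp [hpos, hii]
        rw [hpl, Matrix.single_apply_same] at hR'
        have hcast : ((p ^ j' : ℕ) : R) = (p : R) ^ j * a := by push_cast; exact_mod_cast hR'
        have := dvd_of_zmod_corner hp hcast
        have := (Nat.pow_dvd_pow_iff_le_right hp.one_lt).mp this
        omega
      · rw [Matrix.single_apply_of_ne _ _ _ _ _
          (by rintro ⟨-, hl⟩; rw [Fin.ext_iff] at hl; simp [hpos] at hl; omega)] at hR'
        have hcast : ((p ^ j' : ℕ) : R) = 0 := by push_cast; exact_mod_cast hR'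
        rw [ZMod.natCast_eq_zero_iff] at hcast
        have := (Nat.pow_dvd_pow_iff_le_right hp.one_lt).mp hcast
        omega
    · intro k hk hk1
      rw [Finset.mem_Ico] at hk
      have h2i : 2 * i' ≤ k * i' := Nat.mul_le_mul_right _ (by omega)
      rw [if_neg (by simp only [hpos, Fin.val_zero]; omega), mul_zero]
    · intro hmem
      exact absurd (Finset.mem_Ico.mpr ⟨le_refl 1, by omega⟩) hmem
  · -- j ≤ j' : use k₀ = p^(j'-j)
    set k₀ := p ^ (j' - j) with hk₀
    have hk₀1 : 1 ≤ k₀ := pow_pos hp.pos _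
    have hqsplit : q = k₀ * p ^ j := by rw [hq, hk₀, ← pow_add]; congr 1; omega
    have hik : i' * k₀ < i := by
      have : i' * k₀ * p ^ j < i * p ^ j := by rw [mul_assoc, ← hqsplit]; exact hcon
      exact Nat.lt_of_mul_lt_mul_right this
    have hki : k₀ * i' < i := by rw [mul_comm]; exact hik
    have hposlt : k₀ * i' < i + 1 := by omega
    set pos : Fin (i+1) := ⟨k₀ * i', hposlt⟩ with hpos
    have hk₀q : k₀ ≤ q := Nat.pow_le_pow_right hp.pos (by omega)
    have hL := xq_entry (i := i) i' (1 : R) q 0 pos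
    rw [Finset.sum_eq_single k₀] at hL
    · rw [Matrix.one_apply_ne
        (by intro he; rw [Fin.ext_iff] at he; simp [hpos] at he; omega)] at hL
      rw [one_pow, mul_one, if_pos (by simp [hpos]), mul_one, zero_add] at hL
      have hR' := congrFun (congrFun ha 0) pos
      rw [hL, Matrix.add_apply, Matrix.one_apply_ne
        (by intro he; rw [Fin.ext_iff] at he; simp [hpos] at he; omega)] at hR'
      rw [zero_add, Matrix.single_apply_of_ne _ _ _ _ _
        (by rintro ⟨-, hl⟩; rw [Fin.ext_iff] at hl; simp [hpos] at hl; omega)] at hR'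
      rw [ZMod.natCast_eq_zero_iff] at hR'
      exact not_pow_dvd_choose_pow hp hj' hR'
    · intro k hk hk1
      rw [Finset.mem_Ico] at hk
      rw [if_neg (by
        simp only [hpos, Fin.val_zero, Nat.zero_add]
        intro he
        exact hk1 (Nat.eq_of_mul_eq_mul_right (by omega) he).symm), mul_zero]
    · intro hmem
      exact absurd (Finset.mem_Ico.mpr ⟨by omega, by omega⟩) hmem

end Main2

section Main3

variable {p i i' j j' : ℕ}

/-- when `i < i' * p^(j'-j)`, all generators of `pPow` are trivial. -/
lemma pPow_trivial (hp : p.Prime) (hi : 1 ≤ i) (h1 : 1 ≤ i') (hjj' : j ≤ j')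
    (hilt : i < i' * p ^ (j' - j)) :
    pPow (UTk (ZMod (p ^ (j + 1))) (i + 1) i') (p ^ j') ≤ ⊥ := by
  set R := ZMod (p ^ (j + 1)) with hR
  set q := p ^ j' with hq
  refine (Subgroup.closure_le _).mpr ?_
  rintro x ⟨y, hy, rfl⟩
  rw [SetLike.mem_coe, Subgroup.mem_bot]
  apply Subtype.ext
  apply Units.ext
  show (((y ^ q : ↥(UT R (i+1))) : (Matrix (Fin (i+1)) (Fin (i+1)) R)ˣ) :
    Matrix (Fin (i+1)) (Fin (i+1)) R) = 1
  set N : Matrix (Fin (i+1)) (Fin (i+1)) R :=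
    (((y : (Matrix (Fin (i+1)) (Fin (i+1)) R)ˣ)) : Matrix (Fin (i+1)) (Fin (i+1)) R) - 1
    with hNdef
  have hNsupp : ∀ a b : Fin (i+1), (b : ℕ) < (a : ℕ) + i' → N a b = 0 :=
    UTk_sub_one_support p i i' j y hy
  rw [UT_pow_eq_sum y q]
  ext r s
  have hsplit2 : Finset.range (q+1) = insert 0 (Finset.Ico 1 (q+1)) := by
    ext t; simp; omega
  rw [Matrix.sum_apply, hsplit2, Finset.sum_insert (by simp)]
  simp only [Matrix.smul_apply, smul_eq_mul]
  have h0 : (Nat.choose q 0 : R) * (N ^ 0) r s = (1 : Matrix (Fin (i+1)) (Fin (i+1)) R) r s := by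
    simp
  rw [h0]
  have hrest : ∑ k ∈ Finset.Ico 1 (q+1), (Nat.choose q k : R) * (N ^ k) r s = 0 := by
    apply Finset.sum_eq_zero
    intro k hk
    rw [Finset.mem_Ico] at hk
    by_cases hz : (s : ℕ) < (r : ℕ) + k * i'
    · rw [aux_pow_support N hNsupp k r s hz, mul_zero]
    · push_neg at hz
      have hs_le : (s : ℕ) ≤ i := Nat.lt_succ_iff.mp s.isLt
      have hklt' : k < p ^ (j' - j) := by
        have hklt : k * i' < i' * p ^ (j' - j) := by omega
        rw [mul_comm] at hklt
        exact Nat.lt_of_mul_lt_mul_left hklt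
      rw [key_cast_zero hp hjj' (by omega) (by omega) hklt', zero_mul]
  rw [hrest, add_zero]

/-- The nontrivial corner element. -/
lemma corner_nontrivial (hp : p.Prime) (hi : 1 ≤ i) :
    ∃ g : ↥(UT (ZMod (p ^ (j + 1))) (i + 1)), g ∈ cornerSub p j i ∧ g ≠ 1 := by
  set R := ZMod (p ^ (j + 1)) with hR
  have hMut : IsUnitriangular R (i+1)
      (1 + Matrix.single 0 (Fin.last i) ((p : R) ^ j * 1)) := by
    constructor
    · intro k
      rw [Matrix.add_apply, Matrix.one_apply_eq, Matrix.single_apply_of_ne _ _ _ _ _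
        (by rintro ⟨h0, hl⟩; rw [← h0] at hl; rw [Fin.ext_iff] at hl; simp at hl; omega)]
      simp
    · intro k l h
      rw [Matrix.add_apply, Matrix.one_apply_ne (ne_of_gt h),
        Matrix.single_apply_of_ne _ _ _ _ _ (by
          rintro ⟨h0, hl⟩
          rw [← h0, ← hl] at h
          rw [Fin.lt_def] at h
          simp at h)]
      simp
  refine ⟨mkUT hMut, ⟨1, mkUT_val hMut⟩, ?_⟩
  intro heq
  have hval := congrFun (congrFun (mkUT_val hMut) 0) (Fin.last i)
  rw [heq] at hval
  have h1v : (((1 : ↥(UT R (i+1))) : (Matrix (Fin (i+1)) (Fin (i+1)) R)ˣ) :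
      Matrix (Fin (i+1)) (Fin (i+1)) R) = 1 := rfl
  rw [h1v, Matrix.one_apply_ne (by intro he; rw [Fin.ext_iff] at he; simp at he; omega)] at hval
  rw [Matrix.add_apply, Matrix.one_apply_ne (by intro he; rw [Fin.ext_iff] at he; simp at he; omega),
    Matrix.single_apply_same, zero_add, mul_one] at hval
  have hcast : ((p ^ j : ℕ) : R) = 0 := by push_cast; exact hval.symm
  rw [ZMod.natCast_eq_zero_iff] at hcast
  have := (Nat.pow_dvd_pow_iff_le_right hp.one_lt).mp hcast
  omega

end Main3

section Main4

variable {p i i' j j' : ℕ}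

lemma corner_le_pPow (hp : p.Prime) (hi : 1 ≤ i) (h1 : 1 ≤ i') (h2 : i' ≤ i)
    (hjj' : j ≤ j') (hieq : i = i' * p ^ (j' - j)) :
    cornerSub p j i ≤ pPow (UTk (ZMod (p ^ (j + 1))) (i + 1) i') (p ^ j') := by
  set R := ZMod (p ^ (j + 1)) with hR
  set q := p ^ j' with hq
  have hq1 : 1 ≤ q := pow_pos hp.pos _
  set k₀ := p ^ (j' - j) with hk₀def
  have hk₀1 : 1 ≤ k₀ := pow_pos hp.pos _
  have hk₀q : k₀ ≤ q := Nat.pow_le_pow_right hp.pos (by omega)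
  -- the binomial coefficient C(q, k₀) = p^j * m with p ∤ m
  have hmult : multiplicity p k₀ = j' - j :=
    multiplicity_pow_self hp.ne_zero hp.prime.not_isUnit _
  have hCd : p ^ j ∣ Nat.choose q k₀ :=
    pow_dvd_choose_pow hp (by omega) hk₀q (by rw [hmult]; omega)
  obtain ⟨m, hm⟩ := hCd
  have hpm : ¬ p ∣ m := by
    intro hd
    obtain ⟨t, rfl⟩ := hd
    exact not_pow_dvd_choose_pow hp hjj' ⟨t, by rw [hm]; ring⟩
  have hmu : IsUnit (m : R) := by
    exact (ZMod.isUnit_iff_coprime m (p ^ (j+1))).mpr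
      ((Nat.coprime_comm.mp ((hp.coprime_iff_not_dvd).mpr hpm)).pow_right _)
  obtain ⟨u, hu⟩ := hmu
  intro M hM
  obtain ⟨a, ha⟩ := hM
  set b : R := (↑u⁻¹ : R) * a with hbdef
  set x := mkUT (one_add_smul_shift_unitriangular (n := i+1) i' h1 b) with hxdef
  have hxk := shift_elt_mem_UTk (i := i) h1 b
  have hbpow : ∃ z : R, b ^ k₀ = b + p * z := frob_iter hp _ b
  obtain ⟨z, hz⟩ := hbpow
  have hp1 : ((p : R)) ^ (j + 1) = 0 := by
    have : ((p ^ (j+1) : ℕ) : R) = 0 := ZMod.natCast_self _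
    push_cast at this
    exact this
  have key : x ^ q = M := by
    apply Subtype.ext
    apply Units.ext
    show (((x ^ q : ↥(UT R (i+1))) : (Matrix (Fin (i+1)) (Fin (i+1)) R)ˣ) :
      Matrix (Fin (i+1)) (Fin (i+1)) R) = _
    rw [UT_pow_val, mkUT_val, ha, pow_one_add_smul_shift]
    congr 1
    ext r s
    rw [Matrix.sum_apply]
    simp only [Matrix.smul_apply, shiftM_pow, smul_eq_mul]
    by_cases hrs : (0 : Fin (i+1)) = r ∧ Fin.last i = s
    · obtain ⟨hr, hs⟩ := hrs
      rw [← hr, ← hs, Matrix.single_apply_same]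
      rw [Finset.sum_eq_single k₀]
      · rw [if_pos (by simp [hieq, mul_comm i' k₀]), mul_one]
        -- C(q,k₀) * b^k₀ = p^j * a
        have hC : ((Nat.choose q k₀ : ℕ) : R) = (p : R) ^ j * (m : R) := by
          rw [hm, Nat.cast_mul, Nat.cast_pow]
        rw [hC, hz]
        have hub : (m : R) * b = a := by
          rw [hbdef, ← hu, ← mul_assoc, Units.mul_inv, one_mul]
        calc (p : R) ^ j * (m : R) * (b + (p : R) * z)
            = (p : R) ^ j * ((m : R) * b) + (p : R) ^ (j + 1) * ((m : R) * z) := by ring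
          _ = (p : R) ^ j * a := by rw [hub, hp1, zero_mul, add_zero]
      · intro k hk hkne
        rw [Finset.mem_Ico] at hk
        rw [if_neg (by
          simp only [Fin.val_last, Fin.val_zero, Nat.zero_add]
          intro he
          rw [hieq, mul_comm i' k₀] at he
          exact hkne (Nat.eq_of_mul_eq_mul_right (by omega) he).symm), mul_zero]
      · intro hmem
        exact absurd (Finset.mem_Ico.mpr ⟨by omega, by omega⟩) hmem
    · rw [Matrix.single_apply_of_ne _ _ _ _ _ hrs]
      apply Finset.sum_eq_zero
      intro k hk
      rw [Finset.mem_Ico] at hk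
      by_cases hcond : (s : ℕ) = (r : ℕ) + k * i'
      · have hs_le : (s : ℕ) ≤ i := Nat.lt_succ_iff.mp s.isLt
        have hcorner : ¬((r : ℕ) = 0 ∧ (s : ℕ) = i) := by
          intro ⟨hr0, hsi⟩
          exact hrs ⟨Fin.ext (by simp [hr0]), Fin.ext (by simp [hsi])⟩
        have hklt' : k < k₀ := by
          have hklt : k * i' < k₀ * i' := by
            rw [mul_comm k₀ i', ← hieq]
            omega
          exact Nat.lt_of_mul_lt_mul_right hklt
        rw [key_cast_zero hp hjj' (by omega) (by omega) hklt', zero_mul, zero_mul]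
      · rw [if_neg hcond, mul_zero]
  rw [← key]
  exact Subgroup.subset_closure ⟨x, hxk, rfl⟩

end Main4

/-- Let `p` be a prime, `i ≥ 1`, `j ≥ 0`, `U = U_i(ℤ/p^{j+1})`, `1 ≤ i' ≤ i`, `j' ≥ 0`.  Then:
(b) `(U^{(i')})^{p^{j'}} = I + p^j (ℤ/p^{j+1}) E_{1,i+1}` iff `j' ≥ j` and `i = i' * p^{j'-j}`;
(c) `(U^{(i')})^{p^{j'}} ⊆ I + p^j (ℤ/p^{j+1}) E_{1,i+1}` iff `i' * p^{j'} ≥ i * p^j`. -/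
theorem stmt_10 (p i i' j j' : ℕ) (hp : p.Prime) (hi : 1 ≤ i) (h1 : 1 ≤ i') (h2 : i' ≤ i) :
    (pPow (UTk (ZMod (p ^ (j + 1))) (i + 1) i') (p ^ j') = cornerSub p j i ↔
      (j ≤ j' ∧ i = i' * p ^ (j' - j))) ∧
    (pPow (UTk (ZMod (p ^ (j + 1))) (i + 1) i') (p ^ j') ≤ cornerSub p j i ↔
      i * p ^ j ≤ i' * p ^ j') := by
  have hcsuff := part_c_suff p i i' j j' hp hi h1 h2
  have hcnec := part_c_nec (p := p) (i := i) (i' := i') (j := j) (j' := j') hp hi h1 h2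
  refine ⟨?_, ⟨hcnec, hcsuff⟩⟩
  constructor
  · intro heq
    have hin : i * p ^ j ≤ i' * p ^ j' := hcnec heq.le
    have hjj' : j ≤ j' := by
      have ha : i' * p ^ j ≤ i' * p ^ j' := le_trans (Nat.mul_le_mul_right _ h2) hin
      have hb : p ^ j ≤ p ^ j' := Nat.le_of_mul_le_mul_left ha (by omega)
      exact (Nat.pow_le_pow_iff_right hp.one_lt).mp hb
    have hipow : i ≤ i' * p ^ (j' - j) := by
      have hsplit : p ^ j' = p ^ (j' - j) * p ^ j := by rw [← pow_add]; congr 1; omega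
      rw [hsplit, ← mul_assoc] at hin
      exact Nat.le_of_mul_le_mul_right hin (pow_pos hp.pos _)
    refine ⟨hjj', ?_⟩
    rcases Nat.eq_or_lt_of_le hipow with he | hlt
    · exact he
    · exfalso
      have htriv := pPow_trivial (j' := j') hp hi h1 hjj' hlt
      obtain ⟨g, hg, hgne⟩ := corner_nontrivial (p := p) (i := i) (j := j) hp hi
      rw [← heq] at hg
      exact hgne (Subgroup.mem_bot.mp (htriv hg))
  · rintro ⟨hjj', hieq⟩
    apply le_antisymm
    · apply hcsuff
      rw [hieq, mul_assoc, ← pow_add]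
      have hje : j' - j + j = j' := by omega
      rw [hje]
    · exact corner_le_pPow hp hi h1 h2 hjj' hieq
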